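/- Let d₁, d₂ be positive integers and let ρ be a density matrix indexed by (Fin d₁ × Fin d₂) (positive semidefinite with trace 1). Then there exist a finite index set, unit vectors x_α : Fin d₁ → ℂ and y_α : Fin d₂ → ℂ, and real coefficients c_α with Σ_α c_α = 1, such that ρ = Σ_α c_α • (w_α w_αᴴ), where w_α = x_α ⊗ y_α is the (unit norm) simple tensor with entries w_α(i,j) = x_α i · y_α j. That is, every density matrix is a real affine combination of projections onto unit simple-tensor (product) vectors. -/

import Mathlib

open Matrix Finset
open scoped ComplexOrder Kronecker

set_option linter.unnecessarySeqFocus false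
set_option linter.unreachableTactic false
set_option linter.unusedTactic false

namespace DMPaux

/-- Standard basis vector. -/
def ev {d : ℕ} (i : Fin d) : Fin d → ℂ := Pi.single i 1

/-- Projections onto unit vectors. -/
def projSet (d : ℕ) : Set (Matrix (Fin d) (Fin d) ℂ) :=
  {M | ∃ v : Fin d → ℂ, star v ⬝ᵥ v = 1 ∧ M = vecMulVec v (star v)}

/-- Projections onto unit product vectors. -/
def prodProjSet (d₁ d₂ : ℕ) : Set (Matrix (Fin d₁ × Fin d₂) (Fin d₁ × Fin d₂) ℂ) :=
  {M | ∃ (x : Fin d₁ → ℂ) (y : Fin d₂ → ℂ), star x ⬝ᵥ x = 1 ∧ star y ⬝ᵥ y = 1 ∧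
    M = vecMulVec (fun q : Fin d₁ × Fin d₂ => x q.1 * y q.2)
      (star fun q : Fin d₁ × Fin d₂ => x q.1 * y q.2)}

lemma smul_vecMulVec {d : ℕ} (c : ℂ) (v : Fin d → ℂ) :
    vecMulVec (c • v) (star (c • v)) = (c * (starRingEnd ℂ) c) • vecMulVec v (star v) := by
  ext a b
  simp [vecMulVec_apply, Pi.smul_apply, smul_eq_mul, star_mul']
  ring

lemma smul_dot {d : ℕ} (c : ℂ) (v : Fin d → ℂ) :
    star (c • v) ⬝ᵥ (c • v) = (c * (starRingEnd ℂ) c) * (star v ⬝ᵥ v) := by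
  rw [star_smul, smul_dotProduct, dotProduct_smul]
  simp [smul_eq_mul]
  ring

lemma ev_unit {d : ℕ} (i : Fin d) : star (ev i) ⬝ᵥ ev i = 1 := by
  simp [ev, dotProduct, Pi.single_apply, apply_ite]

lemma dot_two₁ {d : ℕ} {i j : Fin d} (hij : i ≠ j) :
    star (ev i + ev j) ⬝ᵥ (ev i + ev j) = 2 := by
  have h : ∀ a, (star (ev i + ev j)) a * (ev i + ev j) a = ev i a + ev j a := by
    intro a
    by_cases ha : a = i <;> by_cases hb : a = j <;>
      simp_all [ev, Pi.single_apply]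
  simp only [dotProduct, h, Finset.sum_add_distrib]
  have : ∀ k : Fin d, ∑ a, ev k a = 1 := fun k => by simp [ev, Pi.single_apply]
  rw [this, this]; norm_num

lemma dot_two₂ {d : ℕ} {i j : Fin d} (hij : i ≠ j) :
    star (ev i + Complex.I • ev j) ⬝ᵥ (ev i + Complex.I • ev j) = 2 := by
  have h : ∀ a, (star (ev i + Complex.I • ev j)) a * (ev i + Complex.I • ev j) a
      = ev i a + ev j a := by
    intro a
    by_cases ha : a = i <;> by_cases hb : a = j <;>
      simp_all [ev, Pi.single_apply, Complex.conj_I] <;> ring_nf <;> simp [Complex.I_sq]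
  simp only [dotProduct, h, Finset.sum_add_distrib]
  have : ∀ k : Fin d, ∑ a, ev k a = 1 := fun k => by simp [ev, Pi.single_apply]
  rw [this, this]; norm_num

lemma hr : ((((Real.sqrt 2)⁻¹ : ℝ)) : ℂ) * (starRingEnd ℂ) ((((Real.sqrt 2)⁻¹ : ℝ)) : ℂ)
    = 1/2 := by
  rw [Complex.conj_ofReal, ← Complex.ofReal_mul, ← mul_inv,
    Real.mul_self_sqrt (by norm_num)]
  norm_num

lemma proj_mem {d : ℕ} {v : Fin d → ℂ} (hv : star v ⬝ᵥ v = 2) :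
    ∃ u : Fin d → ℂ, star u ⬝ᵥ u = 1 ∧
      vecMulVec u (star u) = (1/2 : ℂ) • vecMulVec v (star v) := by
  refine ⟨((Real.sqrt 2)⁻¹ : ℝ) • v, ?_, ?_⟩
  · rw [show (((Real.sqrt 2)⁻¹ : ℝ) • v) = (((Real.sqrt 2)⁻¹ : ℝ) : ℂ) • v by
      ext a; simp [Complex.real_smul]]
    rw [smul_dot, hv, hr]; norm_num
  · rw [show (((Real.sqrt 2)⁻¹ : ℝ) • v) = (((Real.sqrt 2)⁻¹ : ℝ) : ℂ) • v by
      ext a; simp [Complex.real_smul]]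
    rw [smul_vecMulVec, hr]

lemma stdBasis_mem_span {d : ℕ} (i j : Fin d) :
    Matrix.single i j (1 : ℂ) ∈ Submodule.span ℂ (projSet d) := by
  rcases eq_or_ne i j with rfl | hij
  · apply Submodule.subset_span
    refine ⟨ev i, ev_unit i, ?_⟩
    ext a b
    by_cases ha : i = a <;> by_cases hb : i = b <;>
      simp_all [Matrix.single, vecMulVec_apply, ev, Pi.single_apply] <;> tauto
  · obtain ⟨u₁, hu₁, he₁⟩ := proj_mem (dot_two₁ hij)
    obtain ⟨u₂, hu₂, he₂⟩ := proj_mem (dot_two₂ hij)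
    have key : Matrix.single i j (1:ℂ) =
        vecMulVec u₁ (star u₁)
        + Complex.I • vecMulVec u₂ (star u₂)
        + (-(1+Complex.I)/2) • (vecMulVec (ev i) (star (ev i))
            + vecMulVec (ev j) (star (ev j))) := by
      rw [he₁, he₂]
      ext a b
      by_cases ha : i = a <;> by_cases hb : j = b <;> by_cases hb' : i = b <;>
        by_cases ha' : j = a <;>
        simp_all [Matrix.single, vecMulVec_apply, ev, Pi.single_apply, Complex.conj_I,
          Ne.symm] <;>
        ring_nf <;> simp [Complex.I_sq] <;> ring_nf
    rw [key]
    have m1 : vecMulVec u₁ (star u₁) ∈ Submodule.span ℂ (projSet d) :=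
      Submodule.subset_span ⟨u₁, hu₁, rfl⟩
    have m2 : vecMulVec u₂ (star u₂) ∈ Submodule.span ℂ (projSet d) :=
      Submodule.subset_span ⟨u₂, hu₂, rfl⟩
    have m3 : vecMulVec (ev i) (star (ev i)) ∈ Submodule.span ℂ (projSet d) :=
      Submodule.subset_span ⟨ev i, ev_unit i, rfl⟩
    have m4 : vecMulVec (ev j) (star (ev j)) ∈ Submodule.span ℂ (projSet d) :=
      Submodule.subset_span ⟨ev j, ev_unit j, rfl⟩
    exact Submodule.add_mem _ (Submodule.add_mem _ m1 (Submodule.smul_mem _ _ m2))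
      (Submodule.smul_mem _ _ (Submodule.add_mem _ m3 m4))

lemma kron_vecMulVec {d₁ d₂ : ℕ} (x : Fin d₁ → ℂ) (y : Fin d₂ → ℂ) :
    vecMulVec x (star x) ⊗ₖ vecMulVec y (star y) =
      vecMulVec (fun q : Fin d₁ × Fin d₂ => x q.1 * y q.2)
        (star fun q : Fin d₁ × Fin d₂ => x q.1 * y q.2) := by
  ext ⟨a, c⟩ ⟨b, e⟩
  simp [kroneckerMap_apply, vecMulVec_apply, star_mul']
  ring

lemma kron_mem_span {d₁ d₂ : ℕ} {A : Matrix (Fin d₁) (Fin d₁) ℂ}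
    {B : Matrix (Fin d₂) (Fin d₂) ℂ}
    (hA : A ∈ Submodule.span ℂ (projSet d₁)) (hB : B ∈ Submodule.span ℂ (projSet d₂)) :
    A ⊗ₖ B ∈ Submodule.span ℂ (prodProjSet d₁ d₂) := by
  induction hA using Submodule.span_induction with
  | mem A hA =>
    induction hB using Submodule.span_induction with
    | mem B hB =>
      obtain ⟨x, hx, rfl⟩ := hA
      obtain ⟨y, hy, rfl⟩ := hB
      rw [kron_vecMulVec]
      exact Submodule.subset_span ⟨x, y, hx, hy, rfl⟩
    | zero => rw [kronecker_zero]; exact Submodule.zero_mem _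
    | add B₁ B₂ _ _ h1 h2 => rw [kronecker_add]; exact Submodule.add_mem _ h1 h2
    | smul c B _ h => rw [kronecker_smul]; exact Submodule.smul_mem _ _ h
  | zero => rw [zero_kronecker]; exact Submodule.zero_mem _
  | add A₁ A₂ _ _ h1 h2 => rw [add_kronecker]; exact Submodule.add_mem _ h1 h2
  | smul c A _ h => rw [smul_kronecker]; exact Submodule.smul_mem _ _ h

lemma stdBasis_kron {d₁ d₂ : ℕ} (i j : Fin d₁) (k l : Fin d₂) :
    Matrix.single (i, k) (j, l) (1 : ℂ) =
      Matrix.single i j (1 : ℂ) ⊗ₖ Matrix.single k l (1 : ℂ) := by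
  ext ⟨a, c⟩ ⟨b, e⟩
  simp [kroneckerMap_apply, Matrix.single, Prod.ext_iff, ite_and]
  split_ifs <;> simp_all

lemma all_mem_span {d₁ d₂ : ℕ} (M : Matrix (Fin d₁ × Fin d₂) (Fin d₁ × Fin d₂) ℂ) :
    M ∈ Submodule.span ℂ (prodProjSet d₁ d₂) := by
  rw [matrix_eq_sum_single M]
  apply Submodule.sum_mem
  intro p _
  apply Submodule.sum_mem
  intro q _
  have h1 : Matrix.single p q (M p q) = (M p q) • Matrix.single p q (1 : ℂ) := by
    rw [smul_single, smul_eq_mul, mul_one]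
  rw [h1]
  apply Submodule.smul_mem
  have h2 : Matrix.single p q (1 : ℂ) =
      Matrix.single p.1 q.1 (1 : ℂ) ⊗ₖ Matrix.single p.2 q.2 (1 : ℂ) := by
    rw [← stdBasis_kron]
  rw [h2]
  exact kron_mem_span (stdBasis_mem_span _ _) (stdBasis_mem_span _ _)

lemma vecMulVec_star_herm {n : Type*} (v : n → ℂ) :
    (vecMulVec v (star v))ᴴ = vecMulVec v (star v) := by
  ext a b
  simp [conjTranspose_apply, vecMulVec_apply, mul_comm]

lemma herm_mem_real_span {d₁ d₂ : ℕ} {A : Matrix (Fin d₁ × Fin d₂) (Fin d₁ × Fin d₂) ℂ}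
    (hA : A ∈ Submodule.span ℂ (prodProjSet d₁ d₂)) :
    (1/2 : ℝ) • (A + Aᴴ) ∈ Submodule.span ℝ (prodProjSet d₁ d₂) ∧
    (1/2 : ℝ) • (Complex.I • A + (Complex.I • A)ᴴ) ∈ Submodule.span ℝ (prodProjSet d₁ d₂) := by
  induction hA using Submodule.span_induction with
  | mem A hA =>
    have hherm : Aᴴ = A := by
      obtain ⟨x, y, hx, hy, rfl⟩ := hA
      exact vecMulVec_star_herm _
    constructor
    · have : (1/2 : ℝ) • (A + Aᴴ) = A := by
        rw [hherm]; ext a b; simp [Matrix.smul_apply, Matrix.add_apply]; ring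
      rw [this]; exact Submodule.subset_span hA
    · have : (1/2 : ℝ) • (Complex.I • A + (Complex.I • A)ᴴ) = 0 := by
        rw [conjTranspose_smul, hherm]
        ext a b
        simp [Matrix.smul_apply, Matrix.add_apply, Complex.conj_I]
      rw [this]; exact Submodule.zero_mem _
  | zero => constructor <;> simp [Submodule.zero_mem]
  | add B C _ _ hB hC =>
    constructor
    · have : (1/2 : ℝ) • (B + C + (B + C)ᴴ) =
        (1/2 : ℝ) • (B + Bᴴ) + (1/2 : ℝ) • (C + Cᴴ) := by
        rw [conjTranspose_add]; module
      rw [this]; exact Submodule.add_mem _ hB.1 hC.1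
    · have : (1/2 : ℝ) • (Complex.I • (B + C) + (Complex.I • (B + C))ᴴ) =
        (1/2 : ℝ) • (Complex.I • B + (Complex.I • B)ᴴ)
          + (1/2 : ℝ) • (Complex.I • C + (Complex.I • C)ᴴ) := by
        rw [show Complex.I • (B + C) = Complex.I • B + Complex.I • C from smul_add _ _ _,
          conjTranspose_add]; module
      rw [this]; exact Submodule.add_mem _ hB.2 hC.2
  | smul c B _ hB =>
    have e1 : (1/2 : ℝ) • (c • B + (c • B)ᴴ) =
        c.re • ((1/2 : ℝ) • (B + Bᴴ))
          + c.im • ((1/2 : ℝ) • (Complex.I • B + (Complex.I • B)ᴴ)) := by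
      ext a b
      simp only [Matrix.smul_apply, Matrix.add_apply, conjTranspose_apply, smul_eq_mul,
        Complex.real_smul, Complex.smul_re, star_mul', RCLike.star_def]
      have hc : (c.re : ℂ) + c.im * Complex.I = c := Complex.re_add_im c
      have hconj : (starRingEnd ℂ) c = (c.re : ℂ) - c.im * Complex.I := by
        simp [Complex.ext_iff]
      push_cast [Complex.conj_I]
      linear_combination (-(B a b)/2) * hc + ((starRingEnd ℂ) (B b a))/2 * hconj
    have e2 : (1/2 : ℝ) • (Complex.I • (c • B) + (Complex.I • (c • B))ᴴ) =
        (-c.im) • ((1/2 : ℝ) • (B + Bᴴ))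
          + c.re • ((1/2 : ℝ) • (Complex.I • B + (Complex.I • B)ᴴ)) := by
      ext a b
      simp only [Matrix.smul_apply, Matrix.add_apply, conjTranspose_apply, smul_eq_mul,
        Complex.real_smul, star_mul', RCLike.star_def]
      have hc : (c.re : ℂ) + c.im * Complex.I = c := Complex.re_add_im c
      have hconj : (starRingEnd ℂ) c = (c.re : ℂ) - c.im * Complex.I := by
        simp [Complex.ext_iff]
      have hI : Complex.I ^ 2 = -1 := Complex.I_sq
      push_cast [Complex.conj_I]
      linear_combination (-(Complex.I * B a b)/2) * hc
        + (-(Complex.I * (starRingEnd ℂ) (B b a))/2) * hconj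
        + ((c.im * (B a b + (starRingEnd ℂ) (B b a)))/2) * hI
    constructor
    · rw [e1]
      exact Submodule.add_mem _ (Submodule.smul_mem _ _ hB.1) (Submodule.smul_mem _ _ hB.2)
    · rw [e2]
      exact Submodule.add_mem _ (Submodule.smul_mem _ _ hB.1) (Submodule.smul_mem _ _ hB.2)

lemma prod_unit {d₁ d₂ : ℕ} {x : Fin d₁ → ℂ} {y : Fin d₂ → ℂ}
    (hx : star x ⬝ᵥ x = 1) (hy : star y ⬝ᵥ y = 1) :
    star (fun q : Fin d₁ × Fin d₂ => x q.1 * y q.2) ⬝ᵥ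
      (fun q : Fin d₁ × Fin d₂ => x q.1 * y q.2) = 1 := by
  have : star (fun q : Fin d₁ × Fin d₂ => x q.1 * y q.2) ⬝ᵥ
      (fun q : Fin d₁ × Fin d₂ => x q.1 * y q.2)
      = (star x ⬝ᵥ x) * (star y ⬝ᵥ y) := by
    simp only [dotProduct, Pi.star_apply, star_mul']
    rw [Fintype.sum_prod_type, Finset.sum_mul_sum]
    apply Finset.sum_congr rfl
    intro i _
    apply Finset.sum_congr rfl
    intro j _
    ring
  rw [this, hx, hy, one_mul]

lemma trace_proj {n : Type*} [Fintype n] (w : n → ℂ) :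
    (vecMulVec w (star w)).trace = star w ⬝ᵥ w := by
  simp only [Matrix.trace, Matrix.diag, vecMulVec_apply, dotProduct, Pi.star_apply]
  apply Finset.sum_congr rfl
  intro q _
  ring

end DMPaux

open DMPaux in
/-- Every density matrix on `ℂ^{d₁} ⊗ ℂ^{d₂}` is a real affine
combination of projections onto unit simple-tensor (product) vectors:
`ρ = Σ_α c_α • (w_α w_αᴴ)` with `w_α = x_α ⊗ y_α` unit simple tensors and
real coefficients `c_α` summing to `1`. -/
theorem density_matrix_affine_combination_of_product_projections
    (d₁ d₂ : ℕ) (hd₁ : 0 < d₁) (hd₂ : 0 < d₂)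
    (ρ : Matrix (Fin d₁ × Fin d₂) (Fin d₁ × Fin d₂) ℂ)
    (hρ : ρ.PosSemidef) (hτ : ρ.trace = 1) :
    ∃ (m : ℕ) (c : Fin m → ℝ) (x : Fin m → Fin d₁ → ℂ) (y : Fin m → Fin d₂ → ℂ),
      (∀ α, star (x α) ⬝ᵥ x α = 1) ∧ (∀ α, star (y α) ⬝ᵥ y α = 1) ∧
      (∑ α, c α = 1) ∧
      ρ = ∑ α, c α •
        Matrix.vecMulVec (fun q : Fin d₁ × Fin d₂ => x α q.1 * y α q.2)
          (star fun q : Fin d₁ × Fin d₂ => x α q.1 * y α q.2) := by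
  have hspan : ρ ∈ Submodule.span ℝ (prodProjSet d₁ d₂) := by
    have h := (herm_mem_real_span (all_mem_span ρ)).1
    have hH : ρᴴ = ρ := hρ.1
    rwa [hH, show (1/2 : ℝ) • (ρ + ρ) = ρ by module] at h
  rw [Submodule.mem_span_set'] at hspan
  obtain ⟨m, f, g, hsum⟩ := hspan
  have hmem := fun i => (g i).2
  choose x y hx hy hg using hmem
  refine ⟨m, f, x, y, hx, hy, ?_, ?_⟩
  · -- trace condition
    have hρeq : ρ = ∑ i, f i • Matrix.vecMulVec
        (fun q : Fin d₁ × Fin d₂ => x i q.1 * y i q.2)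
        (star fun q : Fin d₁ × Fin d₂ => x i q.1 * y i q.2) := by
      rw [← hsum]
      apply Finset.sum_congr rfl
      intro i _
      rw [hg i]
    have htr : (1 : ℂ) = ∑ i, (f i : ℂ) := by
      rw [← hτ, hρeq, Matrix.trace_sum]
      apply Finset.sum_congr rfl
      intro i _
      rw [Matrix.trace_smul, trace_proj, prod_unit (hx i) (hy i)]
      simp [Complex.real_smul]
    have : ((∑ i, f i : ℝ) : ℂ) = 1 := by
      push_cast
      exact htr.symm
    exact_mod_cast this
  · rw [← hsum]
    apply Finset.sum_congr rfl
    intro i _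
    rw [hg i]
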